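/- Direct-sum majorization uncertainty relation (DSMUR): Let {M_a}_{a=1}^n and {N_b}_{b=1}^m be POVMs on C^d, let ρ be a density matrix, let λ ∈ [0,1], and set p_a = Tr(M_a ρ), q_b = Tr(N_b ρ). For each k = 1,…,n+m define S_k(λ) = max over subsets I ⊆ {1,…,n}, J ⊆ {1,…,m} with |I| + |J| = k of λ₁( λ Σ_{a∈I} M_a + (1−λ) Σ_{b∈J} N_b ). Then for every k, the sum of the k largest entries of the (n+m)-dimensional vector λp ⊕ (1−λ)q = (λp_1,…,λp_n,(1−λ)q_1,…,(1−λ)q_m) is at most S_k(λ); equivalently, λp ⊕ (1−λ)q ≺ s(λ) where s(λ) = (S_1(λ), S_2(λ)−S_1(λ), …, S_{n+m}(λ)−S_{n+m−1}(λ)). -/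

import Mathlib

open scoped BigOperators ComplexOrder

/-- Sum of the `k` largest entries of `x`: the maximum of `∑ i ∈ s, x i`
over all `k`-element index sets `s`. -/
noncomputable def kMaxSum {ι : Type*} [Fintype ι] (x : ι → ℝ) (k : ℕ) : ℝ :=
  sSup {t : ℝ | ∃ s : Finset ι, s.card = k ∧ t = ∑ i ∈ s, x i}

/-- The largest eigenvalue `λ₁(A)` of a (Hermitian) matrix `A`: the supremum of the real
points of its spectrum. -/
noncomputable def maxEig {d : ℕ} (A : Matrix (Fin d) (Fin d) ℂ) : ℝ :=
  sSup {t : ℝ | (t : ℂ) ∈ spectrum ℂ A}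

/-- `S_k(l)`: the maximum over index sets `I`, `J` with `|I| + |J| = k` of the largest
eigenvalue of `l Σ_{a∈I} M_a + (1−l) Σ_{b∈J} N_b`. -/
noncomputable def Sval {d n m : ℕ} (M : Fin n → Matrix (Fin d) (Fin d) ℂ)
    (N : Fin m → Matrix (Fin d) (Fin d) ℂ) (l : ℝ) (k : ℕ) : ℝ :=
  sSup {t : ℝ | ∃ (I : Finset (Fin n)) (J : Finset (Fin m)), I.card + J.card = k ∧
    t = maxEig ((l : ℂ) • (∑ a ∈ I, M a) + ((1 - l : ℝ) : ℂ) • (∑ b ∈ J, N b))}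

open scoped Matrix

lemma mem_spectrum_diagonal' {d : ℕ} (f : Fin d → ℂ) (z : ℂ) :
    z ∈ spectrum ℂ (Matrix.diagonal f) ↔ ∃ i, f i = z := by
  rw [spectrum.mem_iff, Matrix.algebraMap_eq_diagonal, Matrix.diagonal_sub,
    Matrix.isUnit_iff_isUnit_det, Matrix.det_diagonal, isUnit_iff_ne_zero, not_not,
    Finset.prod_eq_zero_iff]
  constructor
  · rintro ⟨i, -, hi⟩
    refine ⟨i, ?_⟩
    have h0 : z - f i = 0 := by simpa [Pi.algebraMap_apply] using hi
    exact (sub_eq_zero.mp h0).symm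
  · rintro ⟨i, rfl⟩
    exact ⟨i, Finset.mem_univ i, by simp [Pi.algebraMap_apply]⟩

lemma spectrum_real_eq_range_eigenvalues {d : ℕ} {A : Matrix (Fin d) (Fin d) ℂ}
    (hA : A.IsHermitian) :
    {t : ℝ | (t : ℂ) ∈ spectrum ℂ A} = Set.range hA.eigenvalues := by
  have h1 : spectrum ℂ A
      = spectrum ℂ ((Matrix.diagonal (RCLike.ofReal ∘ hA.eigenvalues)
          : Matrix (Fin d) (Fin d) ℂ)) := by
    conv_lhs => rw [hA.spectral_theorem]
    exact spectrum.units_conjugate (u := Unitary.toUnits hA.eigenvectorUnitary)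
  ext t
  constructor
  · intro ht
    rw [Set.mem_setOf_eq, h1, mem_spectrum_diagonal'] at ht
    obtain ⟨i, hi⟩ := ht
    refine ⟨i, ?_⟩
    have hi' : ((hA.eigenvalues i : ℝ) : ℂ) = (t : ℂ) := hi
    exact_mod_cast hi'
  · rintro ⟨i, rfl⟩
    exact spectrum.algebraMap_mem ℂ (hA.eigenvalues_mem_spectrum_real i)

lemma eigenvalue_le_maxEig {d : ℕ} {A : Matrix (Fin d) (Fin d) ℂ}
    (hA : A.IsHermitian) (i : Fin d) : hA.eigenvalues i ≤ maxEig A := by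
  apply le_csSup
  · rw [spectrum_real_eq_range_eigenvalues hA]
    exact (Set.finite_range _).bddAbove
  · exact spectrum.algebraMap_mem ℂ (hA.eigenvalues_mem_spectrum_real i)

lemma trace_re_le_maxEig {d : ℕ} {A ρ : Matrix (Fin d) (Fin d) ℂ}
    (hA : A.IsHermitian) (hρ : ρ.PosSemidef) (hρ1 : ρ.trace = 1) :
    ((A * ρ).trace).re ≤ maxEig A := by
  set U : Matrix (Fin d) (Fin d) ℂ := (hA.eigenvectorUnitary : Matrix (Fin d) (Fin d) ℂ)
    with hU
  set D : Matrix (Fin d) (Fin d) ℂ := Matrix.diagonal (RCLike.ofReal ∘ hA.eigenvalues)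
    with hD
  have hspec : A = U * D * star U := hA.spectral_theorem
  have hUU : U * star U = 1 := Matrix.mem_unitaryGroup_iff.mp hA.eigenvectorUnitary.2
  set σ : Matrix (Fin d) (Fin d) ℂ := star U * ρ * U with hσdef
  have hσ : σ.PosSemidef := by
    rw [hσdef, Matrix.star_eq_conjTranspose]
    exact hρ.conjTranspose_mul_mul_same U
  have htrσ : σ.trace = 1 := by
    rw [hσdef, Matrix.trace_mul_cycle, hUU, one_mul, hρ1]
  have hAρ : (A * ρ).trace = (D * σ).trace := by
    rw [hσdef]
    conv_lhs => rw [hspec]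
    rw [mul_assoc (U * D), Matrix.trace_mul_comm, ← mul_assoc, ← mul_assoc,
      Matrix.trace_mul_comm, ← mul_assoc]
  have hterm : (D * σ).trace = ∑ i, (hA.eigenvalues i : ℂ) * σ i i := by
    rw [Matrix.trace]
    refine Finset.sum_congr rfl fun i _ => ?_
    rw [Matrix.diag, hD, Matrix.diagonal_mul]
    rfl
  have hdiag : ∀ i, 0 ≤ (σ i i).re := by
    intro i
    have h0 : (0 : ℂ) ≤ σ i i := by
      exact hσ.diag_nonneg
    rw [Complex.le_def] at h0
    simpa using h0.1
  have hsum1 : ∑ i, (σ i i).re = 1 := by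
    have h := congrArg Complex.re htrσ
    simpa [Matrix.trace, Matrix.diag, Complex.re_sum] using h
  rw [hAρ, hterm]
  have hre : (∑ i, (hA.eigenvalues i : ℂ) * σ i i).re
      = ∑ i, hA.eigenvalues i * (σ i i).re := by
    rw [Complex.re_sum]
    exact Finset.sum_congr rfl fun i _ => by rw [Complex.re_ofReal_mul]
  rw [hre]
  calc ∑ i, hA.eigenvalues i * (σ i i).re
      ≤ ∑ i, maxEig A * (σ i i).re :=
        Finset.sum_le_sum fun i _ =>
          mul_le_mul_of_nonneg_right (eigenvalue_le_maxEig hA i) (hdiag i)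
    _ = maxEig A := by rw [← Finset.mul_sum, hsum1, mul_one]


/-- Direct-sum majorization uncertainty relation (DSMUR): for every `k = 1, …, n + m`,
the sum of the `k` largest entries of `λp ⊕ (1−λ)q` is at most `S_k(λ)`;
i.e. `λp ⊕ (1−λ)q ≺ s(λ)`. -/
theorem dsmur {d n m : ℕ}
    (M : Fin n → Matrix (Fin d) (Fin d) ℂ)
    (hMpos : ∀ a, (M a).PosSemidef) (hMsum : ∑ a, M a = 1)
    (N : Fin m → Matrix (Fin d) (Fin d) ℂ)
    (hNpos : ∀ b, (N b).PosSemidef) (hNsum : ∑ b, N b = 1)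
    (l : ℝ) (hl : l ∈ Set.Icc (0 : ℝ) 1)
    (ρ : Matrix (Fin d) (Fin d) ℂ) (hρ : ρ.PosSemidef) (hρ1 : ρ.trace = 1) :
    ∀ k ≤ n + m,
      kMaxSum (Fin.append (fun a => l * ((M a * ρ).trace).re)
          (fun b => (1 - l) * ((N b * ρ).trace).re)) k
        ≤ Sval M N l k := by
  intro k hk
  apply csSup_le
  · obtain ⟨s, -, hs⟩ := Finset.exists_subset_card_eq
      (show k ≤ (Finset.univ : Finset (Fin (n+m))).card by simpa using hk)
    exact ⟨_, s, hs, rfl⟩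
  rintro t ⟨s, hsk, rfl⟩
  -- split the index set
  set s' : Finset (Fin n ⊕ Fin m) := s.map finSumFinEquiv.symm.toEmbedding with hs'
  set I : Finset (Fin n) := s'.toLeft with hI
  set J : Finset (Fin m) := s'.toRight with hJ
  have hcard : I.card + J.card = k := by
    rw [hI, hJ, Finset.card_toLeft_add_card_toRight, hs', Finset.card_map, hsk]
  set A : Matrix (Fin d) (Fin d) ℂ :=
    (l : ℂ) • (∑ a ∈ I, M a) + ((1 - l : ℝ) : ℂ) • (∑ b ∈ J, N b) with hA
  have hMI : (∑ a ∈ I, M a).IsHermitian := by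
    rw [Matrix.IsHermitian, Matrix.conjTranspose_sum]
    exact Finset.sum_congr rfl fun a _ => (hMpos a).1
  have hNJ : (∑ b ∈ J, N b).IsHermitian := by
    rw [Matrix.IsHermitian, Matrix.conjTranspose_sum]
    exact Finset.sum_congr rfl fun b _ => (hNpos b).1
  have hAH : A.IsHermitian := by
    have h1 : star (l : ℂ) = (l : ℂ) := by simp [Complex.star_def, Complex.conj_ofReal]
    have h2 : star ((1 - l : ℝ) : ℂ) = ((1 - l : ℝ) : ℂ) := by
      simp [Complex.star_def, Complex.conj_ofReal]
    rw [hA, Matrix.IsHermitian, Matrix.conjTranspose_add, Matrix.conjTranspose_smul,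
      Matrix.conjTranspose_smul, h1, h2, hMI.eq, hNJ.eq]
  -- the sum equals the trace
  have hsumeq : ∑ i ∈ s, (Fin.append (fun a => l * ((M a * ρ).trace).re)
      (fun b => (1 - l) * ((N b * ρ).trace).re)) i = ((A * ρ).trace).re := by
    have hsplit : ∑ i ∈ s, (Fin.append (fun a => l * ((M a * ρ).trace).re)
        (fun b => (1 - l) * ((N b * ρ).trace).re)) i
        = ∑ a ∈ I, l * ((M a * ρ).trace).re
          + ∑ b ∈ J, (1 - l) * ((N b * ρ).trace).re := by
      have h1 : ∑ i ∈ s, (Fin.append (fun a => l * ((M a * ρ).trace).re)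
          (fun b => (1 - l) * ((N b * ρ).trace).re)) i
          = ∑ x ∈ s', (Fin.append (fun a => l * ((M a * ρ).trace).re)
            (fun b => (1 - l) * ((N b * ρ).trace).re)) (finSumFinEquiv x) := by
        rw [hs', Finset.sum_map]
        exact Finset.sum_congr rfl fun i _ => by simp
      rw [h1, ← Finset.toLeft_disjSum_toRight (u := s'), Finset.sum_disjSum]
      congr 1
      · exact Finset.sum_congr rfl fun a _ => by
          simp [finSumFinEquiv_apply_left, Fin.append_left]
      · exact Finset.sum_congr rfl fun b _ => by
          simp [finSumFinEquiv_apply_right, Fin.append_right]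
    have htr : (A * ρ).trace = (l : ℂ) * (∑ a ∈ I, (M a * ρ).trace)
        + ((1 - l : ℝ) : ℂ) * (∑ b ∈ J, (N b * ρ).trace) := by
      rw [hA, add_mul, Matrix.smul_mul, Matrix.smul_mul, Matrix.trace_add,
        Matrix.trace_smul, Matrix.trace_smul, Finset.sum_mul, Finset.sum_mul,
        Matrix.trace_sum, Matrix.trace_sum, smul_eq_mul, smul_eq_mul]
    rw [hsplit, htr, Complex.add_re, Complex.re_ofReal_mul, Complex.re_ofReal_mul,
      Complex.re_sum, Complex.re_sum, Finset.mul_sum, Finset.mul_sum]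
  rw [hsumeq]
  have h1 : ((A * ρ).trace).re ≤ maxEig A := trace_re_le_maxEig hAH hρ hρ1
  refine h1.trans (le_csSup ?_ ⟨I, J, hcard, rfl⟩)
  apply Set.Finite.bddAbove
  apply Set.Finite.subset (Set.finite_range
    (fun p : Finset (Fin n) × Finset (Fin m) =>
      maxEig ((l : ℂ) • (∑ a ∈ p.1, M a) + ((1 - l : ℝ) : ℂ) • (∑ b ∈ p.2, N b))))
  rintro t ⟨I', J', _, rfl⟩
  exact ⟨(I', J'), rfl⟩
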